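/- Let f be a convex function on a convex subset of ℝⁿ, and let l_x and l_y be two compact convex sets contained in the domain whose relative interiors intersect (they intersect transversally). If f is affine when restricted to l_x and affine when restricted to l_y, then f is affine when restricted to the convex hull of l_x ∪ l_y. -/

import Mathlib

open Set

lemma exists_pos_add_smul_mem {W : Type*} [NormedAddCommGroup W] [NormedSpace ℝ W]
    {s : Set W} {z : W} (hz : z ∈ intrinsicInterior ℝ s) {v : W}
    (hv : v ∈ vectorSpan ℝ s) : ∃ ε : ℝ, 0 < ε ∧ z + ε • v ∈ s := by
  obtain ⟨z', hz', rfl⟩ := hz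
  have hmem : ∀ t : ℝ, (z' : W) + t • v ∈ affineSpan ℝ s := by
    intro t
    have h1 : (t • v) +ᵥ (z' : W) ∈ affineSpan ℝ s :=
      AffineSubspace.vadd_mem_of_mem_direction
        (by rw [direction_affineSpan]; exact Submodule.smul_mem _ _ hv) z'.2
    simpa [add_comm] using h1
  set γ : ℝ → affineSpan ℝ s := fun t => ⟨(z' : W) + t • v, hmem t⟩ with hγ
  have hcont : Continuous γ := by
    apply Continuous.subtype_mk
    exact continuous_const.add (continuous_id.smul continuous_const)
  have h0 : γ 0 = z' := by
    apply Subtype.coe_injective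
    simp [hγ]
  have hopen : IsOpen (γ ⁻¹' interior (((↑) : affineSpan ℝ s → W) ⁻¹' s)) :=
    isOpen_interior.preimage hcont
  have h0mem : (0 : ℝ) ∈ γ ⁻¹' interior (((↑) : affineSpan ℝ s → W) ⁻¹' s) := by
    rw [mem_preimage, h0]; exact hz'
  obtain ⟨r, hr, hball⟩ := Metric.isOpen_iff.mp hopen 0 h0mem
  refine ⟨r / 2, by positivity, ?_⟩
  have : γ (r / 2) ∈ (((↑) : affineSpan ℝ s → W) ⁻¹' s) :=
    interior_subset (hball (by rw [Metric.mem_ball, Real.dist_eq]; rw [sub_zero, abs_of_pos (by positivity)]; linarith))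
  simpa [hγ] using this


lemma combo_key {W : Type*} [AddCommGroup W] [Module ℝ W] (x y z : W) {t s ε δ : ℝ}
    (hε : ε ≠ 0) (hδ : δ ≠ 0) (hD : ε*δ + t*δ + s*ε ≠ 0) (hts : t + s = 1) :
    (ε*δ/(ε*δ+t*δ+s*ε)) • (t•x + s•y) + (t*δ/(ε*δ+t*δ+s*ε)) • (z + ε•(z-x))
      + (s*ε/(ε*δ+t*δ+s*ε)) • (z + δ•(z-y)) = z := by
  have h1 : s = 1 - t := by linarith
  subst h1
  match_scalars <;> field_simp <;> ring_nf <;> field_simp <;>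
    exact div_self (by intro h; apply hD; linarith)

open scoped RealInnerProductSpace

set_option maxHeartbeats 1000000 in

theorem stmt_4 (n : ℕ) (K lx ly : Set (EuclideanSpace ℝ (Fin n)))
    (f : EuclideanSpace ℝ (Fin n) → ℝ)
    (hK : Convex ℝ K) (hf : ConvexOn ℝ K f)
    (hlxK : lx ⊆ K) (hlyK : ly ⊆ K)
    (hlxconv : Convex ℝ lx) (hlyconv : Convex ℝ ly)
    (hlxcpt : IsCompact lx) (hlycpt : IsCompact ly)
    (htrans : (intrinsicInterior ℝ lx ∩ intrinsicInterior ℝ ly).Nonempty)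
    (gx : EuclideanSpace ℝ (Fin n) →ᵃ[ℝ] ℝ) (hgx : EqOn f gx lx)
    (gy : EuclideanSpace ℝ (Fin n) →ᵃ[ℝ] ℝ) (hgy : EqOn f gy ly) :
    ∃ g : EuclideanSpace ℝ (Fin n) →ᵃ[ℝ] ℝ, EqOn f g (convexHull ℝ (lx ∪ ly)) := by

  obtain ⟨z, hzx, hzy⟩ := htrans
  have hzlx : z ∈ lx := intrinsicInterior_subset hzx
  have hzly : z ∈ ly := intrinsicInterior_subset hzy
  set Dx := vectorSpan ℝ lx with hDx
  set Dy := vectorSpan ℝ ly with hDy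
  set N : (EuclideanSpace ℝ (Fin n)) →ₗ[ℝ] ℝ := gy.linear - gx.linear with hNdef
  -- affine map evaluation helper
  have haff : ∀ (g : (EuclideanSpace ℝ (Fin n)) →ᵃ[ℝ] ℝ) (p w : (EuclideanSpace ℝ (Fin n))), g (p + w) = g p + g.linear w := by
    intro g p w
    have := g.map_vadd p w
    simpa [add_comm] using this
  -- N vanishes on Dx ⊓ Dy
  have hN : ∀ v, v ∈ Dx → v ∈ Dy → N v = 0 := by
    intro v hvx hvy
    obtain ⟨ε, hε, hεx⟩ := exists_pos_add_smul_mem hzx hvx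
    obtain ⟨δ, hδ, hδy⟩ := exists_pos_add_smul_mem hzy hvy
    set c := min ε δ with hc
    have hc0 : 0 < c := lt_min hε hδ
    have hclx : z + c • v ∈ lx := by
      have h1 : z + c • v = (1 - c / ε) • z + (c / ε) • (z + ε • v) := by
        match_scalars <;> field_simp <;> ring
      rw [h1]
      exact hlxconv hzlx hεx (by rw [sub_nonneg]; exact div_le_one_of_le₀ (min_le_left _ _) hε.le)
        (by positivity) (by ring)
    have hcly : z + c • v ∈ ly := by
      have h1 : z + c • v = (1 - c / δ) • z + (c / δ) • (z + δ • v) := by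
        match_scalars <;> field_simp <;> ring
      rw [h1]
      exact hlyconv hzly hδy (by rw [sub_nonneg]; exact div_le_one_of_le₀ (min_le_right _ _) hδ.le)
        (by positivity) (by ring)
    have e1 : gx z + gx.linear (c • v) = gy z + gy.linear (c • v) := by
      have := (hgx hclx).symm.trans (hgy hcly)
      rwa [haff gx, haff gy] at this
    have e0 : gx z = gy z := (hgx hzlx).symm.trans (hgy hzly)
    have e2 : gx.linear (c • v) = gy.linear (c • v) := by linarith
    have : c * gx.linear v = c * gy.linear v := by
      simpa [map_smul, smul_eq_mul] using e2
    have e3 : gx.linear v = gy.linear v := by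
      exact mul_left_cancel₀ hc0.ne' this
    simp [hNdef, e3]
  -- Riesz representation of N
  set N' : (EuclideanSpace ℝ (Fin n)) →L[ℝ] ℝ := LinearMap.toContinuousLinearMap N with hN'def
  set u : (EuclideanSpace ℝ (Fin n)) := (InnerProductSpace.toDual ℝ (EuclideanSpace ℝ (Fin n))).symm N' with hu
  have huv : ∀ v : (EuclideanSpace ℝ (Fin n)), ⟪u, v⟫ = N v := fun v => InnerProductSpace.toDual_symm_apply
  have humem : u ∈ (Dx ⊓ Dy)ᗮ := by
    rw [Submodule.mem_orthogonal]
    intro v hv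
    rw [real_inner_comm, huv]
    exact hN v hv.1 hv.2
  have horth : (Dx ⊓ Dy)ᗮ = Dxᗮ ⊔ Dyᗮ := by
    have h1 : Dx ⊓ Dy = (Dxᗮ ⊔ Dyᗮ)ᗮ := by
      rw [← Submodule.inf_orthogonal, Submodule.orthogonal_orthogonal,
        Submodule.orthogonal_orthogonal]
    rw [h1, Submodule.orthogonal_orthogonal]
  rw [horth] at humem
  obtain ⟨a, ha, b, hb, hab⟩ := Submodule.mem_sup.mp humem
  -- the global affine map
  set L : (EuclideanSpace ℝ (Fin n)) →ₗ[ℝ] ℝ := gx.linear + ((innerSL ℝ a).toLinearMap) with hLdef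
  set g : (EuclideanSpace ℝ (Fin n)) →ᵃ[ℝ] ℝ :=
    { toFun := fun p => f z + L (p - z)
      linear := L
      map_vadd' := by
        intro p v
        show f z + L (v + p - z) = L v + (f z + L (p - z))
        have : v + p - z = v + (p - z) := by abel
        rw [this, map_add]; ring } with hg
  have hgval : ∀ p : (EuclideanSpace ℝ (Fin n)), g p = f z + L (p - z) := fun p => rfl
  have hLx : ∀ w, w ∈ Dx → L w = gx.linear w := by
    intro w hw
    have h0 : ⟪a, w⟫ = 0 := by
      rw [real_inner_comm]
      exact (Submodule.mem_orthogonal Dx a).mp ha w hw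
    simp [hLdef, h0]
  have hLy : ∀ w, w ∈ Dy → L w = gy.linear w := by
    intro w hw
    have hbw : ⟪b, w⟫ = 0 := by
      rw [real_inner_comm]
      exact (Submodule.mem_orthogonal Dy b).mp hb w hw
    have haw : ⟪a, w⟫ = N w := by
      have : ⟪u, w⟫ = ⟪a, w⟫ + ⟪b, w⟫ := by rw [← hab, inner_add_left]
      rw [huv] at this
      linarith
    simp only [hLdef, LinearMap.add_apply, ContinuousLinearMap.coe_coe, innerSL_apply_apply]
    rw [haw]
    simp [hNdef]
  have hfgx : EqOn f g lx := by
    intro p hp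
    have hd : p - z ∈ Dx := by
      have := vsub_mem_vectorSpan ℝ hp hzlx
      simpa using this
    rw [hgval, hLx _ hd, hgx hzlx]
    have : gx p = gx z + gx.linear (p - z) := by
      have h2 := haff gx z (p - z)
      simpa using h2
    rw [hgx hp, this]
  have hfgy : EqOn f g ly := by
    intro p hp
    have hd : p - z ∈ Dy := by
      have := vsub_mem_vectorSpan ℝ hp hzly
      simpa using this
    rw [hgval, hLy _ hd, hgy hzly]
    have : gy p = gy z + gy.linear (p - z) := by
      have h2 := haff gy z (p - z)
      simpa using h2
    rw [hgy hp, this]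
  refine ⟨g, ?_⟩
  have hull_eq : convexHull ℝ (lx ∪ ly) = convexJoin ℝ lx ly :=
    hlxconv.convexHull_union hlyconv ⟨z, hzlx⟩ ⟨z, hzly⟩
  rw [hull_eq]
  rintro p hp
  obtain ⟨x, hx, y, hy, hseg⟩ := mem_convexJoin.mp hp
  obtain ⟨t, s', ht, hs', hts, rfl⟩ := hseg
  rcases eq_or_lt_of_le ht with ht0 | ht0
  · have hs1 : s' = 1 := by linarith
    rw [← ht0, hs1]
    simpa using hfgy hy
  rcases eq_or_lt_of_le hs' with hs0 | hs0
  · have ht1 : t = 1 := by linarith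
    rw [← hs0, ht1]
    simpa using hfgx hx
  -- main case
  set p := t • x + s' • y with hpdef
  obtain ⟨ε, hε, hz1⟩ := exists_pos_add_smul_mem hzx
    (by simpa using vsub_mem_vectorSpan ℝ hzlx hx : z - x ∈ Dx)
  obtain ⟨δ, hδ, hz2⟩ := exists_pos_add_smul_mem hzy
    (by simpa using vsub_mem_vectorSpan ℝ hzly hy : z - y ∈ Dy)
  have hD : (0:ℝ) < ε * δ + t * δ + s' * ε := by
    have h1 := mul_pos hε hδ
    have h2 := mul_pos ht0 hδ
    have h3 := mul_pos hs0 hε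
    linarith
  have hDne : ε * δ + t * δ + s' * ε ≠ 0 := hD.ne'
  set D := ε * δ + t * δ + s' * ε with hDdef
  set w1 := ε * δ / D with hw1
  set w2 := t * δ / D with hw2
  set w3 := s' * ε / D with hw3
  have hw1pos : 0 < w1 := by rw [hw1]; exact div_pos (mul_pos hε hδ) hD
  have hw2pos : 0 < w2 := by rw [hw2]; exact div_pos (mul_pos ht0 hδ) hD
  have hw3pos : 0 < w3 := by rw [hw3]; exact div_pos (mul_pos hs0 hε) hD
  have hwsum : w1 + w2 + w3 = 1 := by
    rw [hw1, hw2, hw3, hDdef]; field_simp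
  have hcomb : w1 • p + w2 • (z + ε • (z - x)) + w3 • (z + δ • (z - y)) = z := by
    rw [hpdef, hw1, hw2, hw3, hDdef]
    exact combo_key x y z hε.ne' hδ.ne' (hDdef ▸ hDne) hts
  -- Jensen for f over three points
  have hjz : f z ≤ w1 * f p + w2 * f (z + ε • (z - x)) + w3 * f (z + δ • (z - y)) := by
    have h := hf.map_sum_le (t := Finset.univ) (w := ![w1, w2, w3])
      (p := ![p, z + ε • (z - x), z + δ • (z - y)])
      (by intro i _; fin_cases i <;> simp [hw1pos.le, hw2pos.le, hw3pos.le])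
      (by simp [Fin.sum_univ_three, hwsum])
      (by
        intro i _
        fin_cases i
        · simpa using hK (hlxK hx) (hlyK hy) ht hs' hts
        · simpa using hlxK hz1
        · simpa using hlyK hz2)
    rw [Fin.sum_univ_three, Fin.sum_univ_three] at h
    simp only [Matrix.cons_val_zero, Matrix.cons_val_one, Matrix.head_cons,
      Matrix.cons_val_two, Matrix.tail_cons, smul_eq_mul] at h
    calc f z = f (w1 • p + w2 • (z + ε • (z - x)) + w3 • (z + δ • (z - y))) := by rw [hcomb]
    _ ≤ _ := h
  -- affine combination for g
  have hgcomb : w1 * g p + w2 * g (z + ε • (z - x)) + w3 * g (z + δ • (z - y)) = g z := by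
    rw [hgval p, hgval (z + ε • (z - x)), hgval (z + δ • (z - y)), hgval z]
    have hker : w1 • (p - z) + w2 • ((z + ε • (z - x)) - z) + w3 • ((z + δ • (z - y)) - z)
        = (0 : EuclideanSpace ℝ (Fin n)) := by
      have expand : w1 • (p - z) + w2 • ((z + ε • (z - x)) - z) + w3 • ((z + δ • (z - y)) - z)
          = (w1 • p + w2 • (z + ε • (z - x)) + w3 • (z + δ • (z - y))) - (w1 + w2 + w3) • z := by
        match_scalars <;> ring
      rw [expand, hcomb, hwsum, one_smul, sub_self]
    have hL0 : w1 * L (p - z) + w2 * L ((z + ε • (z - x)) - z) + w3 * L ((z + δ • (z - y)) - z)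
        = 0 := by
      have h0 : L (w1 • (p - z) + w2 • ((z + ε • (z - x)) - z) + w3 • ((z + δ • (z - y)) - z))
          = w1 * L (p - z) + w2 * L ((z + ε • (z - x)) - z) + w3 * L ((z + δ • (z - y)) - z) := by
        rw [map_add, map_add, map_smul, map_smul, map_smul]
        simp only [smul_eq_mul]
      rw [hker, map_zero] at h0
      linarith [h0]
    have hsz : L (z - z) = 0 := by simp
    rw [hsz]
    linear_combination f z * hwsum + hL0
  have hfz1 : f (z + ε • (z - x)) = g (z + ε • (z - x)) := hfgx hz1
  have hfz2 : f (z + δ • (z - y)) = g (z + δ • (z - y)) := hfgy hz2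
  have hfz : f z = g z := hfgx hzlx
  have hge : g p ≤ f p := by
    have h1 : w1 * g p ≤ w1 * f p := by
      have h2 := hjz
      rw [hfz, hfz1, hfz2] at h2
      linarith [hgcomb, h2]
    exact (mul_le_mul_iff_right₀ hw1pos).mp h1
  have hle : f p ≤ g p := by
    have h1 : f p ≤ t * f x + s' * f y := by
      have := hf.2 (hlxK hx) (hlyK hy) ht hs' hts
      simpa [smul_eq_mul, ← hpdef] using this
    have h2 : g p = t * g x + s' * g y := by
      rw [hpdef]
      simpa [smul_eq_mul] using
        (Convex.combo_affine_apply (f := g) (x := x) (y := y) hts)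
    rw [h2, ← hfgx hx, ← hfgy hy]
    exact h1
  exact le_antisymm hle hge
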